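/- arXiv:chao-dyn/9801016 — 6 statements merged into one kernel-verified Lean document; each statement's English description precedes it below -/
import Mathlib

section
/- Suppose ξ : ℝ → 𝔤 and a : ℝ → V* are C¹ curves with a'(t) = −a(t)∘ρ(ξ(t)), let μ(t) := D₁l(ξ(t), a(t)) ∈ 𝔤*, assume Ξ(μ(t), a(t)) = ξ(t) for all t, and assume μ is differentiable and satisfies the Euler–Poincaré equation μ'(t)(ζ) = −μ(t)([ξ(t), ζ]) − D₂l(ξ(t), a(t))(a(t)∘ρ(ζ)) for all ζ ∈ 𝔤. Then (μ, a) satisfies the Lie–Poisson equations for the Hamiltonian h: for all ζ ∈ 𝔤 and all t, μ'(t)(ζ) = −μ(t)([Ξ(μ(t), a(t)), ζ]) + D₂h(μ(t), a(t))(a(t)∘ρ(ζ)), and a'(t) = −a(t)∘ρ(Ξ(μ(t), a(t))). -/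
/-- solutions of the Euler–Poincaré equation with advected parameter
`a' = −a∘ρ(ξ)` are mapped by the Legendre transformation `μ = D₁l(ξ, a)`,
`h(μ,a) = μ(Ξ(μ,a)) − l(Ξ(μ,a),a)` to solutions of the semidirect-product
Lie–Poisson equations
`μ'(ζ) = −μ([Ξ(μ,a), ζ]) + D₂h(μ,a)(a∘ρ(ζ))`, `a' = −a∘ρ(Ξ(μ,a))`. -/
theorem stmt4 {G V : Type*}
    [NormedAddCommGroup G] [NormedSpace ℝ G] [FiniteDimensional ℝ G]
    [NormedAddCommGroup V] [NormedSpace ℝ V] [FiniteDimensional ℝ V]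
    (bracket : G →ₗ[ℝ] G →ₗ[ℝ] G)
    (hskew : ∀ x y, bracket x y = -bracket y x)
    (hjacobi : ∀ x y z,
      bracket x (bracket y z) = bracket (bracket x y) z + bracket y (bracket x z))
    (ρ : G →ₗ[ℝ] V →ₗ[ℝ] V)
    (hρ : ∀ x y, ρ (bracket x y) = ρ x ∘ₗ ρ y - ρ y ∘ₗ ρ x)
    (l : G × (V →L[ℝ] ℝ) → ℝ) (hl : ContDiff ℝ 1 l)
    (Ξ : (G →L[ℝ] ℝ) × (V →L[ℝ] ℝ) → G) (hΞ : Differentiable ℝ Ξ)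
    (hLeg : ∀ (μ : G →L[ℝ] ℝ) (a : V →L[ℝ] ℝ),
      (fderiv ℝ l (Ξ (μ, a), a)).comp (ContinuousLinearMap.inl ℝ G (V →L[ℝ] ℝ)) = μ)
    (h : (G →L[ℝ] ℝ) × (V →L[ℝ] ℝ) → ℝ)
    (hh : ∀ μ a, h (μ, a) = μ (Ξ (μ, a)) - l (Ξ (μ, a), a))
    (ξ : ℝ → G) (a : ℝ → V →L[ℝ] ℝ)
    (hξ : ContDiff ℝ 1 ξ) (ha : ContDiff ℝ 1 a)
    (hadv : ∀ t, deriv a t = -(a t).comp (LinearMap.toContinuousLinearMap (ρ (ξ t))))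
    (μ : ℝ → G →L[ℝ] ℝ)
    (hμdef : ∀ t, μ t
      = (fderiv ℝ l (ξ t, a t)).comp (ContinuousLinearMap.inl ℝ G (V →L[ℝ] ℝ)))
    (hΞμ : ∀ t, Ξ (μ t, a t) = ξ t)
    (hμdiff : Differentiable ℝ μ)
    (hEP : ∀ (t : ℝ) (ζ : G),
      deriv (fun τ => μ τ ζ) t
        = -μ t (bracket (ξ t) ζ)
          - fderiv ℝ l (ξ t, a t)
              (0, (a t).comp (LinearMap.toContinuousLinearMap (ρ ζ)))) :
    (∀ (t : ℝ) (ζ : G),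
      deriv (fun τ => μ τ ζ) t
        = -μ t (bracket (Ξ (μ t, a t)) ζ)
          + fderiv ℝ h (μ t, a t)
              (0, (a t).comp (LinearMap.toContinuousLinearMap (ρ ζ)))) ∧
    (∀ t : ℝ,
      deriv a t = -(a t).comp (LinearMap.toContinuousLinearMap (ρ (Ξ (μ t, a t))))) := by

  have key : ∀ (q : (G →L[ℝ] ℝ) × (V →L[ℝ] ℝ)) (b : V →L[ℝ] ℝ),
      fderiv ℝ h q (0, b) = - fderiv ℝ l (Ξ q, q.2) (0, b) := by
    intro q b
    set DΞ := fderiv ℝ Ξ q with hDΞ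
    set Dl := fderiv ℝ l (Ξ q, q.2) with hDl
    have hΞd : HasFDerivAt Ξ DΞ q := (hΞ q).hasFDerivAt
    have hF : HasFDerivAt (fun p : (G →L[ℝ] ℝ) × (V →L[ℝ] ℝ) => (Ξ p, p.2))
        (DΞ.prod (ContinuousLinearMap.snd ℝ _ _)) q :=
      HasFDerivAt.prodMk hΞd (hasFDerivAt_snd (p := q))
    have hld : HasFDerivAt l Dl (Ξ q, q.2) :=
      (hl.differentiable one_ne_zero (Ξ q, q.2)).hasFDerivAt
    have h2 : HasFDerivAt (fun p : (G →L[ℝ] ℝ) × (V →L[ℝ] ℝ) => l (Ξ p, p.2))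
        (Dl.comp (DΞ.prod (ContinuousLinearMap.snd ℝ _ _))) q := hld.comp q hF
    have hG : HasFDerivAt (fun p : (G →L[ℝ] ℝ) × (V →L[ℝ] ℝ) => (p.1, Ξ p))
        ((ContinuousLinearMap.fst ℝ _ _).prod DΞ) q :=
      HasFDerivAt.prodMk (hasFDerivAt_fst (p := q)) hΞd
    have hbil :
        HasFDerivAt (fun pp : (G →L[ℝ] ℝ) × G => pp.1 pp.2)
          ((isBoundedBilinearMap_apply (𝕜 := ℝ) (E := G) (F := ℝ)).deriv (q.1, Ξ q))
          (q.1, Ξ q) :=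
      (isBoundedBilinearMap_apply (𝕜 := ℝ) (E := G) (F := ℝ)).hasFDerivAt (q.1, Ξ q)
    have h1 : HasFDerivAt (fun p : (G →L[ℝ] ℝ) × (V →L[ℝ] ℝ) => p.1 (Ξ p))
        (((isBoundedBilinearMap_apply (𝕜 := ℝ) (E := G) (F := ℝ)).deriv (q.1, Ξ q)).comp
          ((ContinuousLinearMap.fst ℝ _ _).prod DΞ)) q := HasFDerivAt.comp (g := fun pp : (G →L[ℝ] ℝ) × G => pp.1 pp.2) q hbil hG
    have hheq : h = fun p : (G →L[ℝ] ℝ) × (V →L[ℝ] ℝ) => p.1 (Ξ p) - l (Ξ p, p.2) :=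
      funext fun p => hh p.1 p.2
    have hhd : HasFDerivAt h
        ((((isBoundedBilinearMap_apply (𝕜 := ℝ) (E := G) (F := ℝ)).deriv (q.1, Ξ q)).comp
          ((ContinuousLinearMap.fst ℝ _ _).prod DΞ)) -
         (Dl.comp (DΞ.prod (ContinuousLinearMap.snd ℝ _ _)))) q := by
      rw [hheq]; exact h1.sub h2
    rw [hhd.fderiv]
    have e1 : Dl (DΞ (0, b), b) = q.1 (DΞ (0, b)) + Dl (0, b) := by
      have : ((DΞ (0, b), b) : G × (V →L[ℝ] ℝ)) = (DΞ (0, b), 0) + (0, b) := by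
        simp [Prod.ext_iff]
      rw [this, map_add]
      congr 1
      have := hLeg q.1 q.2
      calc Dl (DΞ (0, b), 0)
          = (Dl.comp (ContinuousLinearMap.inl ℝ G (V →L[ℝ] ℝ))) (DΞ (0, b)) := rfl
        _ = q.1 (DΞ (0, b)) := by rw [hDl]; exact congrFun (congrArg _ this) _
    simp only [ContinuousLinearMap.sub_apply, ContinuousLinearMap.comp_apply,
      ContinuousLinearMap.prod_apply, ContinuousLinearMap.coe_fst',
      ContinuousLinearMap.coe_snd', IsBoundedBilinearMap.deriv_apply,
      ContinuousLinearMap.zero_apply]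
    rw [e1]
    ring
  constructor
  · intro t ζ
    rw [hEP t ζ, hΞμ t]
    have := key (μ t, a t) ((a t).comp (LinearMap.toContinuousLinearMap (ρ ζ)))
    rw [this]
    simp [hΞμ t]
    ring
  · intro t
    rw [hadv t, hΞμ t]
end

section
/- For every fixed matrix η ∈ Matrix (n×n, ℝ), the Kelvin–Noether quantity t ↦ μ(t)(g(t) · η · g(t)⁻¹) is differentiable, and its derivative equals f(t)(g(t) · η · g(t)⁻¹); that is, along solutions of the forced Euler–Poincaré equation the coadjoint-transported momentum changes exactly by the transported forcing term. -/
attribute [local instance] Matrix.normedAddCommGroup Matrix.normedSpace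

section aux
variable {n : ℕ}

private lemma hasDerivAt_matrix {F : ℝ → Matrix (Fin n) (Fin n) ℝ}
    {F' : Matrix (Fin n) (Fin n) ℝ} {t : ℝ} :
    HasDerivAt F F' t ↔ ∀ i j, HasDerivAt (fun τ => F τ i j) (F' i j) t := by
  exact hasDerivAt_pi.trans (forall_congr' fun i => hasDerivAt_pi)

private lemma hasDerivAt_mul {a b : ℝ → Matrix (Fin n) (Fin n) ℝ}
    {a' b' : Matrix (Fin n) (Fin n) ℝ} {t : ℝ}
    (ha : HasDerivAt a a' t) (hb : HasDerivAt b b' t) :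
    HasDerivAt (fun τ => a τ * b τ) (a' * b t + a t * b') t := by
  rw [hasDerivAt_matrix] at *
  intro i j
  have : ∀ τ, (a τ * b τ) i j = ∑ k, a τ i k * b τ k j := fun τ => Matrix.mul_apply
  simp only [this]
  have : (a' * b t + a t * b') i j = ∑ k, (a' i k * b t k j + a t i k * b' k j) := by
    simp [Matrix.mul_apply, Matrix.add_apply, Finset.sum_add_distrib]
  rw [this]
  exact HasDerivAt.fun_sum fun k _ => (ha i k).mul (hb k j)

private lemma differentiableAt_det {A : ℝ → Matrix (Fin n) (Fin n) ℝ} {t : ℝ}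
    (h : ∀ i j, DifferentiableAt ℝ (fun τ => A τ i j) t) :
    DifferentiableAt ℝ (fun τ => (A τ).det) t := by
  simp only [Matrix.det_apply']
  apply DifferentiableAt.fun_sum
  intro σ _
  exact (DifferentiableAt.fun_finsetProd fun i _ => h (σ i) i).const_mul _

end aux

/-- Kelvin–Noether with forcing: if `g' = ξ·g` with `g(t)` invertible,
`μ(t)` is a differentiable curve of linear functionals on matrices satisfying the
forced Euler–Poincaré equation `μ'(M) = −μ(ξM − Mξ) + f(M)`, then for every fixed
matrix `η` the Kelvin–Noether quantity `t ↦ μ(t)(g(t) η g(t)⁻¹)` is differentiable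
with derivative `f(t)(g(t) η g(t)⁻¹)`. -/
theorem stmt5 {n : ℕ}
    (g ξ : ℝ → Matrix (Fin n) (Fin n) ℝ)
    (hξcont : Continuous ξ)
    (hginv : ∀ t, IsUnit (g t))
    (hg : ∀ t, HasDerivAt g (ξ t * g t) t)
    (μ dμ f : ℝ → Matrix (Fin n) (Fin n) ℝ →ₗ[ℝ] ℝ)
    (hμ : ∀ (t : ℝ) (M : Matrix (Fin n) (Fin n) ℝ), HasDerivAt (fun τ => μ τ M) (dμ t M) t)
    (hEP : ∀ (t : ℝ) (M : Matrix (Fin n) (Fin n) ℝ),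
      dμ t M = -μ t (ξ t * M - M * ξ t) + f t M) :
    ∀ (η : Matrix (Fin n) (Fin n) ℝ) (t : ℝ),
      HasDerivAt (fun τ => μ τ (g τ * η * (g τ)⁻¹)) (f t (g t * η * (g t)⁻¹)) t := by
  intro η t
  -- entrywise differentiability of g
  have hgent : ∀ s i j, HasDerivAt (fun τ => g τ i j) ((ξ s * g s) i j) s :=
    fun s => hasDerivAt_matrix.mp (hg s)
  -- det of g is unit
  have hdet : ∀ s, IsUnit (g s).det := fun s => (Matrix.isUnit_iff_isUnit_det (g s)).mp (hginv s)
  -- entrywise differentiability of inverse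
  have hinvd : ∀ s i j, DifferentiableAt ℝ (fun τ => (g τ)⁻¹ i j) s := by
    intro s i j
    have : ∀ τ, (g τ)⁻¹ i j = ((g τ).det)⁻¹ * (g τ).adjugate i j := by
      intro τ
      rw [Matrix.inv_def, Matrix.smul_apply, Ring.inverse_eq_inv', smul_eq_mul]
    simp only [this, Matrix.adjugate_apply]
    apply DifferentiableAt.mul
    · exact (differentiableAt_det fun i j => (hgent s i j).differentiableAt).inv
        (IsUnit.ne_zero (hdet s))
    · apply differentiableAt_det
      intro k l
      by_cases hk : k = j
      · subst hk; simp [Matrix.updateRow_self]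
      · simp only [Matrix.updateRow_ne hk]
        exact (hgent s k l).differentiableAt
  -- hence inverse is differentiable as a matrix function
  have hinvD : ∀ s, ∃ D, HasDerivAt (fun τ => (g τ)⁻¹) D s := by
    intro s
    refine ⟨Matrix.of fun i j => deriv (fun τ => (g τ)⁻¹ i j) s, hasDerivAt_matrix.mpr ?_⟩
    intro i j
    exact (hinvd s i j).hasDerivAt
  -- identify the derivative
  have hinv : ∀ s, HasDerivAt (fun τ => (g τ)⁻¹) (-((g s)⁻¹ * ξ s)) s := by
    intro s
    obtain ⟨D, hD⟩ := hinvD s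
    have h1 : HasDerivAt (fun τ => g τ * (g τ)⁻¹) (ξ s * g s * (g s)⁻¹ + g s * D) s :=
      hasDerivAt_mul (hg s) hD
    have h2 : (fun τ => g τ * (g τ)⁻¹) = fun _ => (1 : Matrix (Fin n) (Fin n) ℝ) := by
      funext τ; exact Matrix.mul_nonsing_inv _ (hdet τ)
    rw [h2] at h1
    have h3 : ξ s * g s * (g s)⁻¹ + g s * D = 0 := h1.unique (hasDerivAt_const _ _)
    have h4 : ξ s * g s * (g s)⁻¹ = ξ s := by
      rw [mul_assoc, Matrix.mul_nonsing_inv _ (hdet s), mul_one]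
    have h5 : g s * D = -(ξ s) := by rw [h4] at h3; linear_combination (norm := module) h3
    have : D = -((g s)⁻¹ * ξ s) := by
      have := congrArg (fun M => (g s)⁻¹ * M) h5
      simpa [← mul_assoc, Matrix.nonsing_inv_mul _ (hdet s)] using this
    rwa [this] at hD
  -- derivative of A τ = g τ * η * (g τ)⁻¹
  set A : ℝ → Matrix (Fin n) (Fin n) ℝ := fun τ => g τ * η * (g τ)⁻¹ with hA
  have hAd : HasDerivAt A (ξ t * A t - A t * ξ t) t := by
    have h1 : HasDerivAt (fun τ => g τ * η) (ξ t * g t * η) t := by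
      simpa using hasDerivAt_mul (hg t) (hasDerivAt_const t η)
    have h2 := hasDerivAt_mul h1 (hinv t)
    convert h2 using 1
    simp only [hA, mul_neg, ← sub_eq_add_neg, mul_assoc]
  -- expand μ τ (A τ) over the standard basis
  have key : ∀ (ν : Matrix (Fin n) (Fin n) ℝ →ₗ[ℝ] ℝ) (M : Matrix (Fin n) (Fin n) ℝ),
      ν M = ∑ i, ∑ j, M i j * ν (Matrix.single i j 1) := by
    intro ν M
    conv_lhs => rw [Matrix.matrix_eq_sum_single M]
    rw [map_sum]
    congr 1; funext i
    rw [map_sum]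
    congr 1; funext j
    rw [show Matrix.single i j (M i j) = (M i j) • Matrix.single i j 1 by
      rw [Matrix.smul_single, smul_eq_mul, mul_one], map_smul, smul_eq_mul]
  have hAent := hasDerivAt_matrix.mp hAd
  have main : HasDerivAt (fun τ => μ τ (A τ))
      (∑ i, ∑ j, ((ξ t * A t - A t * ξ t) i j * μ t (Matrix.single i j 1)
        + A t i j * dμ t (Matrix.single i j 1))) t := by
    have : (fun τ => μ τ (A τ)) = fun τ => ∑ i, ∑ j, A τ i j * μ τ (Matrix.single i j 1) := by
      funext τ; exact key (μ τ) (A τ)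
    rw [this]
    apply HasDerivAt.fun_sum
    intro i _
    apply HasDerivAt.fun_sum
    intro j _
    exact (hAent i j).mul (hμ t _)
  convert main using 1
  rw [Finset.sum_congr rfl (fun i _ => Finset.sum_add_distrib), Finset.sum_add_distrib]
  rw [← key (μ t) (ξ t * A t - A t * ξ t), ← key (dμ t) (A t)]
  rw [hEP t (A t)]
  abel
end

section
/- Let z : ℝ × ℝ → ℝⁿ be a C² map with ∂_t z(t,s) = u(t, z(t,s)) and z(t, s+1) = z(t,s) for all (t,s) (a loop of trajectories of u). Then the circulation t ↦ ∫₀¹ Σᵢ αᵢ(t, z(t,s)) · ∂_s zᵢ(t,s) ds is constant in t. -/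
open scoped BigOperators
open Metric MeasureTheory

private lemma clm_decomp {n : ℕ} (L : (ℝ × (Fin n → ℝ)) →L[ℝ] ℝ) (v : Fin n → ℝ) :
    L (0, v) = ∑ j, v j * L (0, Pi.single j 1) := by
  have hv : ((0 : ℝ), v) = ∑ j, v j • ((0 : ℝ), (Pi.single j 1 : Fin n → ℝ)) := by
    rw [Prod.ext_iff]
    constructor
    · rw [Prod.fst_sum]; simp
    · show v = (∑ j, v j • ((0 : ℝ), (Pi.single j 1 : Fin n → ℝ))).2
      rw [Prod.snd_sum]
      funext x
      simp [Finset.sum_apply, Pi.single_apply]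
  rw [hv, map_sum]
  apply Finset.sum_congr rfl
  intro j _
  rw [_root_.map_smul, smul_eq_mul]

private lemma fderiv_pi_apply' {E : Type*} [NormedAddCommGroup E] [NormedSpace ℝ E] {n : ℕ}
    {f : E → Fin n → ℝ} {x : E} (hf : DifferentiableAt ℝ f x) (v : E) (i : Fin n) :
    fderiv ℝ (fun y => f y i) x v = fderiv ℝ f x v i := by
  have h : (fun y => f y i)
      = (ContinuousLinearMap.proj (R := ℝ) (φ := fun _ : Fin n => ℝ) i) ∘ f := rfl
  rw [h, fderiv_comp x (ContinuousLinearMap.differentiableAt _) hf]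
  simp

private lemma alg_cancel {n : ℕ} (a b c : Fin n → ℝ) (M : Fin n → Fin n → ℝ) :
    ∑ i, ((-(∑ j, a j * M i j) - c i) * b i + a i * ∑ j, b j * M j i)
      = -∑ i, b i * c i := by
  have h1 : ∑ i, a i * ∑ j, b j * M j i = ∑ i, (∑ j, a j * M i j) * b i := by
    simp only [Finset.mul_sum, Finset.sum_mul]
    rw [Finset.sum_comm]
    apply Finset.sum_congr rfl
    intro i _
    apply Finset.sum_congr rfl
    intro j _
    ring
  have h2 : ∀ i, (-(∑ j, a j * M i j) - c i) * b i + a i * ∑ j, b j * M j i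
      = (a i * ∑ j, b j * M j i - (∑ j, a j * M i j) * b i) - b i * c i := by
    intro i; ring
  rw [Finset.sum_congr rfl fun i _ => h2 i, Finset.sum_sub_distrib, Finset.sum_sub_distrib,
    h1, sub_self, zero_sub]
/-- Kelvin circulation theorem: if the one-form `α` is transported
along the C¹ vector field `u` with potential forcing `G`, and `z(t,s)` is a C²
loop of trajectories of `u` (periodic in `s` with period 1), then the circulation
`t ↦ ∫₀¹ Σᵢ αᵢ(t, z(t,s)) ∂ₛzᵢ(t,s) ds` is constant in `t`. -/
theorem stmt7 {n : ℕ}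
    (u α : ℝ × (Fin n → ℝ) → Fin n → ℝ)
    (G : ℝ × (Fin n → ℝ) → ℝ)
    (hu : ContDiff ℝ 1 u) (hα : ContDiff ℝ 1 α) (hG : ContDiff ℝ 1 G)
    (htransport : ∀ (t : ℝ) (z : Fin n → ℝ) (i : Fin n),
      fderiv ℝ (fun p => α p i) (t, z) (1, 0)
        + (∑ j : Fin n, u (t, z) j * fderiv ℝ (fun p => α p i) (t, z) (0, Pi.single j 1))
        + (∑ j : Fin n, α (t, z) j * fderiv ℝ (fun p => u p j) (t, z) (0, Pi.single i 1))
        + fderiv ℝ G (t, z) (0, Pi.single i 1) = 0)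
    (z : ℝ × ℝ → Fin n → ℝ)
    (hz : ContDiff ℝ 2 z)
    (hflow : ∀ t s : ℝ, deriv (fun τ => z (τ, s)) t = u (t, z (t, s)))
    (hper : ∀ t s : ℝ, z (t, s + 1) = z (t, s)) :
    ∀ t t' : ℝ,
      (∫ s in (0:ℝ)..1, ∑ i : Fin n, α (t, z (t, s)) i * deriv (fun σ => z (t, σ)) s i)
        = ∫ s in (0:ℝ)..1, ∑ i : Fin n, α (t', z (t', s)) i * deriv (fun σ => z (t', σ)) s i := by
  have hz1 : ContDiff ℝ 1 z := hz.of_le one_le_two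
  have hzd : Differentiable ℝ z := hz1.differentiable one_ne_zero
  have hud : Differentiable ℝ u := hu.differentiable one_ne_zero
  have hGd : Differentiable ℝ G := hG.differentiable one_ne_zero
  -- derivatives of the curves
  have hcurve_t : ∀ t s : ℝ, HasDerivAt (fun τ => z (τ, s)) (fderiv ℝ z (t, s) (1, 0)) t :=
    fun t s => (hzd (t, s)).hasFDerivAt.comp_hasDerivAt t
      ((hasDerivAt_id t).prodMk (hasDerivAt_const t s))
  have hcurve_s : ∀ t s : ℝ, HasDerivAt (fun σ => z (t, σ)) (fderiv ℝ z (t, s) (0, 1)) s :=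
    fun t s => (hzd (t, s)).hasFDerivAt.comp_hasDerivAt s
      ((hasDerivAt_const s t).prodMk (hasDerivAt_id s))
  have hflow' : ∀ t s : ℝ, fderiv ℝ z (t, s) (1, 0) = u (t, z (t, s)) := by
    intro t s
    rw [← (hcurve_t t s).deriv, hflow]
  have hderiv_s : ∀ t s : ℝ, deriv (fun σ => z (t, σ)) s = fderiv ℝ z (t, s) (0, 1) :=
    fun t s => (hcurve_s t s).deriv
  -- the integrand as a function on ℝ²
  set F : ℝ × ℝ → ℝ := fun p => ∑ i, α (p.1, z p) i * fderiv ℝ z p (0, 1) i with hFdef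
  have hDz : ContDiff ℝ 1 (fderiv ℝ z) := hz.fderiv_right (by norm_num)
  have hDzd : Differentiable ℝ (fderiv ℝ z) := hDz.differentiable one_ne_zero
  have hzmap : ContDiff ℝ 1 (fun p : ℝ × ℝ => (p.1, z p)) := contDiff_fst.prodMk hz1
  have hB : ContDiff ℝ 1 (fun p : ℝ × ℝ => fderiv ℝ z p (0, 1)) :=
    (ContinuousLinearMap.apply ℝ (Fin n → ℝ) (((0:ℝ), (1:ℝ)))).contDiff.comp hDz
  have hF : ContDiff ℝ 1 F := by
    apply ContDiff.sum
    intro i _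
    exact ((contDiff_pi.1 hα i).comp hzmap).mul
      ((ContinuousLinearMap.proj (R := ℝ) (φ := fun _ : Fin n => ℝ) i).contDiff.comp hB)
  have hFd : Differentiable ℝ F := hF.differentiable one_ne_zero
  -- the t-derivative of F along horizontal lines
  have hF't : ∀ t s : ℝ, HasDerivAt (fun τ => F (τ, s)) (fderiv ℝ F (t, s) (1, 0)) t :=
    fun t s => by have := (hFd (t, s)).hasFDerivAt.comp_hasDerivAt t
                    ((hasDerivAt_id t).prodMk (hasDerivAt_const t s)); exact this
  -- key computation
  have key : ∀ t s : ℝ, HasDerivAt (fun τ => F (τ, s))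
      (-(deriv (fun σ => G (t, z (t, σ))) s)) t := by
    intro t s
    have hγt : HasDerivAt (fun τ : ℝ => (τ, z (τ, s))) ((1 : ℝ), u (t, z (t, s))) t := by
      have := (hasDerivAt_id t).prodMk (hcurve_t t s)
      rwa [hflow'] at this
    have hγs : HasDerivAt (fun σ : ℝ => (t, z (t, σ))) ((0 : ℝ), fderiv ℝ z (t, s) (0, 1)) s :=
      (hasDerivAt_const s t).prodMk (hcurve_s t s)
    -- derivative of αᵢ along flow
    have hA : ∀ i : Fin n, HasDerivAt (fun τ => α (τ, z (τ, s)) i)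
        (-(∑ j, α (t, z (t, s)) j
            * fderiv ℝ (fun p => u p j) (t, z (t, s)) (0, Pi.single i 1))
          - fderiv ℝ G (t, z (t, s)) (0, Pi.single i 1)) t := by
      intro i
      have hαi : Differentiable ℝ (fun p => α p i) := (contDiff_pi.1 hα i).differentiable one_ne_zero
      have h0 : HasDerivAt (fun τ => α (τ, z (τ, s)) i)
          (fderiv ℝ (fun p => α p i) (t, z (t, s)) (1, u (t, z (t, s)))) t :=
        by have := (hαi (t, z (t, s))).hasFDerivAt.comp_hasDerivAt t hγt; exact this
      have hval : fderiv ℝ (fun p => α p i) (t, z (t, s)) (1, u (t, z (t, s)))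
          = -(∑ j, α (t, z (t, s)) j
              * fderiv ℝ (fun p => u p j) (t, z (t, s)) (0, Pi.single i 1))
            - fderiv ℝ G (t, z (t, s)) (0, Pi.single i 1) := by
        have hsplit : ((1:ℝ), u (t, z (t, s)))
            = ((1:ℝ), (0 : Fin n → ℝ)) + ((0:ℝ), u (t, z (t, s))) := by
          simp [Prod.ext_iff]
        rw [hsplit, map_add, clm_decomp]
        have := htransport t (z (t, s)) i
        linarith
      rwa [hval] at h0
    -- derivative of ∂ₛzᵢ in t, via symmetry of second derivatives
    have hBt : HasDerivAt (fun τ => fderiv ℝ z (τ, s) (0, 1))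
        (fderiv ℝ u (t, z (t, s)) (0, fderiv ℝ z (t, s) (0, 1))) t := by
      have e01 := ContinuousLinearMap.apply ℝ (Fin n → ℝ) (((0:ℝ), (1:ℝ)))
      have h2a : HasDerivAt (fun τ => fderiv ℝ z (τ, s))
          (fderiv ℝ (fderiv ℝ z) (t, s) (1, 0)) t :=
        (hDzd (t, s)).hasFDerivAt.comp_hasDerivAt t
          ((hasDerivAt_id t).prodMk (hasDerivAt_const t s))
      have h2b : HasDerivAt (fun τ => fderiv ℝ z (τ, s) (0, 1))
          (fderiv ℝ (fderiv ℝ z) (t, s) (1, 0) (0, 1)) t :=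
        (ContinuousLinearMap.apply ℝ (Fin n → ℝ)
          (((0:ℝ), (1:ℝ)))).hasFDerivAt.comp_hasDerivAt t h2a
      have hsymm : fderiv ℝ (fderiv ℝ z) (t, s) (1, 0) (0, 1)
          = fderiv ℝ (fderiv ℝ z) (t, s) (0, 1) (1, 0) :=
        (hz.contDiffAt.isSymmSndFDerivAt (by simp)) _ _
      have h2as : HasDerivAt (fun σ => fderiv ℝ z (t, σ))
          (fderiv ℝ (fderiv ℝ z) (t, s) (0, 1)) s :=
        (hDzd (t, s)).hasFDerivAt.comp_hasDerivAt s
          ((hasDerivAt_const s t).prodMk (hasDerivAt_id s))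
      have h2c : HasDerivAt (fun σ => fderiv ℝ z (t, σ) (1, 0))
          (fderiv ℝ (fderiv ℝ z) (t, s) (0, 1) (1, 0)) s :=
        (ContinuousLinearMap.apply ℝ (Fin n → ℝ)
          (((1:ℝ), (0:ℝ)))).hasFDerivAt.comp_hasDerivAt s h2as
      have h2c' : HasDerivAt (fun σ => u (t, z (t, σ)))
          (fderiv ℝ (fderiv ℝ z) (t, s) (0, 1) (1, 0)) s := by
        simpa only [hflow'] using h2c
      have h2c'' : HasDerivAt (fun σ => u (t, z (t, σ)))
          (fderiv ℝ u (t, z (t, s)) (0, fderiv ℝ z (t, s) (0, 1))) s :=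
        (hud (t, z (t, s))).hasFDerivAt.comp_hasDerivAt s hγs
      have hWeq := h2c'.unique h2c''
      rw [hsymm, hWeq] at h2b
      exact h2b
    have hBti : ∀ i : Fin n, HasDerivAt (fun τ => fderiv ℝ z (τ, s) (0, 1) i)
        (∑ j, fderiv ℝ z (t, s) (0, 1) j
          * fderiv ℝ (fun p => u p i) (t, z (t, s)) (0, Pi.single j 1)) t := by
      intro i
      have := (ContinuousLinearMap.proj (R := ℝ) (φ := fun _ : Fin n => ℝ)
        i).hasFDerivAt.comp_hasDerivAt t hBt
      have hval : fderiv ℝ u (t, z (t, s)) (0, fderiv ℝ z (t, s) (0, 1)) i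
          = ∑ j, fderiv ℝ z (t, s) (0, 1) j
            * fderiv ℝ (fun p => u p i) (t, z (t, s)) (0, Pi.single j 1) := by
        rw [← fderiv_pi_apply' (hud _) _ i, clm_decomp]
      simpa [hval, Function.comp_def] using this
    -- product and sum
    have hsum : HasDerivAt (fun τ => F (τ, s))
        (∑ i, ((-(∑ j, α (t, z (t, s)) j
              * fderiv ℝ (fun p => u p j) (t, z (t, s)) (0, Pi.single i 1))
            - fderiv ℝ G (t, z (t, s)) (0, Pi.single i 1)) * fderiv ℝ z (t, s) (0, 1) i
          + α (t, z (t, s)) i * ∑ j, fderiv ℝ z (t, s) (0, 1) j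
              * fderiv ℝ (fun p => u p i) (t, z (t, s)) (0, Pi.single j 1))) t := by
      apply HasDerivAt.fun_sum
      intro i _
      exact (hA i).mul (hBti i)
    -- derivative of G along the loop
    have hg : HasDerivAt (fun σ => G (t, z (t, σ)))
        (∑ i, fderiv ℝ z (t, s) (0, 1) i
          * fderiv ℝ G (t, z (t, s)) (0, Pi.single i 1)) s := by
      have h0 : HasDerivAt (fun σ => G (t, z (t, σ)))
          (fderiv ℝ G (t, z (t, s)) (0, fderiv ℝ z (t, s) (0, 1))) s :=
        (hGd (t, z (t, s))).hasFDerivAt.comp_hasDerivAt s hγs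
      rwa [clm_decomp] at h0
    rw [hg.deriv]
    have := alg_cancel (fun i => α (t, z (t, s)) i) (fun i => fderiv ℝ z (t, s) (0, 1) i)
      (fun i => fderiv ℝ G (t, z (t, s)) (0, Pi.single i 1))
      (fun i j => fderiv ℝ (fun p => u p j) (t, z (t, s)) (0, Pi.single i 1))
    rw [this] at hsum
    have hmc : ∀ i : Fin n, fderiv ℝ z (t, s) (0, 1) i
        * fderiv ℝ G (t, z (t, s)) (0, Pi.single i 1)
        = fderiv ℝ z (t, s) (0, 1) i * fderiv ℝ G (t, z (t, s)) (0, Pi.single i 1) := fun _ => rfl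
    exact hsum
  -- F'(t₀,·) integrates to zero
  have hzero : ∀ t₀ : ℝ, (∫ s in (0:ℝ)..1, fderiv ℝ F (t₀, s) (1, 0)) = 0 := by
    intro t₀
    have heq : ∀ s : ℝ, fderiv ℝ F (t₀, s) (1, 0)
        = -(deriv (fun σ => G (t₀, z (t₀, σ))) s) :=
      fun s => (hF't t₀ s).unique (key t₀ s)
    rw [intervalIntegral.integral_congr (g := fun s => -(deriv (fun σ => G (t₀, z (t₀, σ))) s))
      (fun s _ => heq s)]
    rw [intervalIntegral.integral_neg, neg_eq_zero]
    have hgC1 : ContDiff ℝ 1 (fun σ => G (t₀, z (t₀, σ))) :=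
      hG.comp (contDiff_const.prodMk (hz1.comp (contDiff_const.prodMk contDiff_id)))
    rw [intervalIntegral.integral_deriv_eq_sub
      (fun x _ => (hgC1.differentiable one_ne_zero).differentiableAt)
      ((hgC1.continuous_deriv le_rfl).intervalIntegrable _ _)]
    have : z (t₀, 1) = z (t₀, 0) := by
      have := hper t₀ 0
      norm_num at this
      exact this
    rw [this, sub_self]
  -- derivative of circulation is zero
  have hΦ : ∀ t₀ : ℝ, HasDerivAt (fun t => ∫ s in (0:ℝ)..1, F (t, s)) 0 t₀ := by
    intro t₀
    have hFc : Continuous F := hF.continuous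
    have hF'c : Continuous (fun p : ℝ × ℝ => fderiv ℝ F p (1, 0)) :=
      ((ContinuousLinearMap.apply ℝ ℝ (((1:ℝ), (0:ℝ)))).continuous).comp
        ((hF.fderiv_right (m := 0) (by norm_num)).continuous)
    obtain ⟨C, hC⟩ := ((isCompact_Icc (a := t₀ - 1) (b := t₀ + 1)).prod
      (isCompact_Icc (a := (0:ℝ)) (b := 1))).exists_bound_of_continuousOn hF'c.continuousOn
    have main := intervalIntegral.hasDerivAt_integral_of_dominated_loc_of_deriv_le
      (F := fun t s => F (t, s)) (F' := fun t s => fderiv ℝ F (t, s) (1, 0))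
      (x₀ := t₀) (a := (0:ℝ)) (b := 1) (bound := fun _ => C) (μ := volume)
      (Metric.ball_mem_nhds t₀ one_pos)
      (Filter.Eventually.of_forall fun x =>
        ((hFc.comp (Continuous.prodMk_right x)).aestronglyMeasurable))
      ((hFc.comp (Continuous.prodMk_right t₀)).intervalIntegrable _ _)
      ((hF'c.comp (Continuous.prodMk_right t₀)).aestronglyMeasurable)
      (Filter.Eventually.of_forall ?_)
      (intervalIntegrable_const)
      (Filter.Eventually.of_forall fun s _ x _ => hF't x s)
    · have := main.2
      rwa [hzero t₀] at this
    · intro s hs x hx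
      apply hC
      constructor
      · have hd := abs_lt.1 (by simpa [Real.dist_eq] using (mem_ball.1 hx))
        constructor <;> [linarith [hd.1]; linarith [hd.2]]
      · rw [Set.uIoc_of_le (by norm_num : (0:ℝ) ≤ 1)] at hs
        exact ⟨le_of_lt hs.1, hs.2⟩
  -- conclude
  intro t t'
  have hint : ∀ t : ℝ,
      (∫ s in (0:ℝ)..1, ∑ i, α (t, z (t, s)) i * deriv (fun σ => z (t, σ)) s i)
        = ∫ s in (0:ℝ)..1, F (t, s) := by
    intro t
    apply intervalIntegral.integral_congr
    intro s _
    simp only [hderiv_s, hFdef]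
  rw [hint t, hint t']
  exact is_const_of_deriv_eq_zero (fun x => (hΦ x).differentiableAt) (fun x => (hΦ x).deriv) t t'
end

section
/- For all (t, z) ∈ ℝ × ℝⁿ, the determinant of the Jacobian matrix D_zφ(t, z) satisfies the Liouville formula ∂_t det(D_zφ(t, z)) = (div u)(t, φ(t, z)) · det(D_zφ(t, z)), where (div u)(t, y) = Σᵢ ∂_{yᵢ} uᵢ(t, y). -/
open scoped BigOperators

noncomputable def detCML (n : ℕ) :
    ContinuousMultilinearMap ℝ (fun _ : Fin n => (Fin n → ℝ)) ℝ :=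
  MultilinearMap.mkContinuous
    (Matrix.detRowAlternating : ((Fin n → ℝ) [⋀^Fin n]→ₗ[ℝ] ℝ)).toMultilinearMap
    (n.factorial) (by
      intro m
      show ‖(Matrix.detRowAlternating (R := ℝ) (n := Fin n)) m‖ ≤ _
      have h1 : (Matrix.detRowAlternating (R := ℝ) (n := Fin n)) m =
          ∑ σ : Equiv.Perm (Fin n), (Equiv.Perm.sign σ : ℤ) * ∏ i, m (σ i) i := by
        rw [show (Matrix.detRowAlternating (R := ℝ) (n := Fin n)) m = Matrix.det (Matrix.of m) from rfl,
          Matrix.det_apply]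
        simp [Units.smul_def, zsmul_eq_mul]
      rw [h1]
      calc ‖∑ σ : Equiv.Perm (Fin n), ((Equiv.Perm.sign σ : ℤ) : ℝ) * ∏ i, m (σ i) i‖
          ≤ ∑ σ : Equiv.Perm (Fin n), ‖((Equiv.Perm.sign σ : ℤ) : ℝ) * ∏ i, m (σ i) i‖ :=
            norm_sum_le _ _
        _ ≤ ∑ σ : Equiv.Perm (Fin n), ∏ i, ‖m i‖ := by
            apply Finset.sum_le_sum
            intro σ _
            rw [norm_mul]
            have hs : ‖((Equiv.Perm.sign σ : ℤ) : ℝ)‖ = 1 := by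
              rcases Int.units_eq_one_or (Equiv.Perm.sign σ) with h | h <;> simp [h]
            rw [hs, one_mul]
            have : ‖∏ i, m (σ i) i‖ ≤ ∏ i, ‖m (σ i)‖ := by
              rw [norm_prod]
              exact Finset.prod_le_prod (fun i _ => norm_nonneg _)
                (fun i _ => norm_le_pi_norm (m (σ i)) i)
            calc ‖∏ i, m (σ i) i‖ ≤ ∏ i, ‖m (σ i)‖ := this
              _ = ∏ i, ‖m i‖ := Equiv.prod_comp σ (fun i => ‖m i‖)
        _ = (n.factorial : ℝ) * ∏ i, ‖m i‖ := by
            rw [Finset.sum_const, Finset.card_univ, Fintype.card_perm, nsmul_eq_mul, Fintype.card_fin]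
      )

lemma detCML_apply {n : ℕ} (m : Fin n → Fin n → ℝ) :
    detCML n m = Matrix.det (Matrix.of m) := rfl

lemma det_curve_deriv {n : ℕ} (m : ℝ → Fin n → Fin n → ℝ) (m' : Fin n → Fin n → ℝ) (t : ℝ)
    (hm : ∀ i j, HasDerivAt (fun τ => m τ i j) (m' i j) t) :
    HasDerivAt (fun τ => Matrix.det (Matrix.of (m τ)))
      (∑ i, detCML n (Function.update (m t) i (m' i))) t := by
  have h1 : HasDerivAt m m' t := hasDerivAt_pi.2 fun i => hasDerivAt_pi.2 (hm i)
  have h2 := ((detCML n).hasFDerivAt (m t)).comp_hasDerivAt t h1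
  simpa [ContinuousMultilinearMap.linearDeriv_apply, detCML_apply, Function.comp_def] using h2

lemma pderiv_right {n : ℕ} {f : ℝ × (Fin n → ℝ) → ℝ} {p : ℝ × (Fin n → ℝ)}
    (hf : DifferentiableAt ℝ f p) (v : Fin n → ℝ) :
    fderiv ℝ (fun y => f (p.1, y)) p.2 v = fderiv ℝ f p (0, v) := by
  have h := hf.hasFDerivAt.comp p.2 (hasFDerivAt_prodMk_right (𝕜 := ℝ) p.1 p.2)
  rw [show (fun y => f (p.1, y)) = f ∘ (fun y => (p.1, y)) from rfl, h.fderiv]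
  simp

lemma pderiv_left {n : ℕ} {f : ℝ × (Fin n → ℝ) → ℝ} {p : ℝ × (Fin n → ℝ)}
    (hf : DifferentiableAt ℝ f p) :
    deriv (fun s => f (s, p.2)) p.1 = fderiv ℝ f p (1, 0) := by
  have h := hf.hasFDerivAt.comp_hasDerivAt p.1
    ((hasDerivAt_id p.1).prodMk (hasDerivAt_const p.1 p.2))
  simpa [Function.comp_def] using h.deriv

lemma entry_deriv {n : ℕ}
    (u : ℝ × (Fin n → ℝ) → Fin n → ℝ) (hu : ContDiff ℝ 1 u)
    (φ : ℝ × (Fin n → ℝ) → Fin n → ℝ) (hφ : ContDiff ℝ 2 φ)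
    (hflow : ∀ t z, deriv (fun τ => φ (τ, z)) t = u (t, φ (t, z)))
    (t : ℝ) (z : Fin n → ℝ) (i j : Fin n) :
    HasDerivAt (fun τ => fderiv ℝ (fun y => φ (τ, y) i) z (Pi.single j 1))
      (∑ k, fderiv ℝ (fun y => u (t, y) i) (φ (t, z)) (Pi.single k 1) *
        fderiv ℝ (fun y => φ (t, y) k) z (Pi.single j 1)) t := by
  have hφd : Differentiable ℝ φ := hφ.differentiable (by norm_num)
  set g : ℝ × (Fin n → ℝ) → ℝ := fun p => φ p i with hgdef
  have hg : ContDiff ℝ 2 g :=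
    (ContinuousLinearMap.proj (R := ℝ) (φ := fun _ : Fin n => ℝ) i).contDiff.comp hφ
  have hgd : Differentiable ℝ g := hg.differentiable (by norm_num)
  have hg1 : ContDiff ℝ 1 (fderiv ℝ g) := hg.fderiv_right (le_refl 2)
  have hg1d : Differentiable ℝ (fderiv ℝ g) := hg1.differentiable (by norm_num)
  -- the entry function is τ ↦ fderiv g (τ, z) (0, eⱼ)
  have hEq : (fun τ => fderiv ℝ (fun y => φ (τ, y) i) z (Pi.single j 1)) =
      fun τ => fderiv ℝ g (τ, z) (0, Pi.single j 1) := by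
    funext τ
    exact pderiv_right (p := (τ, z)) (hgd (τ, z)) (Pi.single j 1)
  rw [hEq]
  -- derivative of τ ↦ fderiv g (τ, z) (0, eⱼ) is f''(1,0)(0,eⱼ)
  have key : HasDerivAt (fun τ => fderiv ℝ g (τ, z) (0, Pi.single j 1))
      (fderiv ℝ (fderiv ℝ g) (t, z) (1, 0) (0, Pi.single j 1)) t := by
    have hΦ : HasFDerivAt (fun q => fderiv ℝ g q (0, Pi.single j 1))
        ((ContinuousLinearMap.apply ℝ ℝ ((0, Pi.single j 1) : ℝ × (Fin n → ℝ))).comp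
          (fderiv ℝ (fderiv ℝ g) (t, z))) (t, z) := by
      have h0 := (ContinuousLinearMap.apply ℝ ℝ ((0, Pi.single j 1) : ℝ × (Fin n → ℝ))
        ).hasFDerivAt.comp (t, z) (hg1d (t, z)).hasFDerivAt
      exact h0
    have h2 := hΦ.comp_hasDerivAt t ((hasDerivAt_id t).prodMk (hasDerivAt_const t z))
    simpa [Function.comp_def] using h2
  -- symmetry of second derivative
  have hsymm := (hg.contDiffAt (x := (t, z))).isSymmSndFDerivAt (by simp [minSmoothness_of_isRCLikeNormedField])
  rw [hsymm] at key
  -- identify f''(0,eⱼ)(1,0) as fderiv of q ↦ u (q.1, φ q) i in direction (0, eⱼ)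
  have hΨ : HasFDerivAt (fun q => fderiv ℝ g q (1, 0))
      ((ContinuousLinearMap.apply ℝ ℝ ((1, 0) : ℝ × (Fin n → ℝ))).comp
        (fderiv ℝ (fderiv ℝ g) (t, z))) (t, z) := by
    have h0 := (ContinuousLinearMap.apply ℝ ℝ ((1, 0) : ℝ × (Fin n → ℝ))
      ).hasFDerivAt.comp (t, z) (hg1d (t, z)).hasFDerivAt
    exact h0
  have hw : (fun q : ℝ × (Fin n → ℝ) => fderiv ℝ g q (1, 0)) =
      fun q => u (q.1, φ q) i := by
    funext q
    have h1 : deriv (fun s => g (s, q.2)) q.1 = fderiv ℝ g q (1, 0) :=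
      pderiv_left (hgd q)
    have hc : HasDerivAt (fun s : ℝ => ((s, q.2) : ℝ × (Fin n → ℝ))) (1, 0) q.1 :=
      (hasDerivAt_id q.1).prodMk (hasDerivAt_const q.1 q.2)
    have hd : HasDerivAt (fun s => φ (s, q.2)) (fderiv ℝ φ q (1, 0)) q.1 := by
      simpa [Function.comp_def] using (hφd q).hasFDerivAt.comp_hasDerivAt q.1 hc
    have h2 : deriv (fun s => φ (s, q.2)) q.1 = u (q.1, φ (q.1, q.2)) := hflow q.1 q.2
    have hD : HasDerivAt (fun s => φ (s, q.2)) (u (q.1, φ (q.1, q.2))) q.1 := by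
      rwa [hd.deriv] at h2 ▸ hd
    have hDi : HasDerivAt (fun s => φ (s, q.2) i) (u (q.1, φ (q.1, q.2)) i) q.1 :=
      hasDerivAt_pi.1 hD i
    calc fderiv ℝ g q (1, 0) = deriv (fun s => g (s, q.2)) q.1 := h1.symm
      _ = u (q.1, φ (q.1, q.2)) i := hDi.deriv
      _ = u (q.1, φ q) i := rfl
  -- chain rule for q ↦ u (q.1, φ q) i
  have hui : ContDiff ℝ 1 (fun p => u p i) :=
    (ContinuousLinearMap.proj (R := ℝ) (φ := fun _ : Fin n => ℝ) i).contDiff.comp hu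
  have hG : HasFDerivAt (fun q : ℝ × (Fin n → ℝ) => ((q.1, φ q) : ℝ × (Fin n → ℝ)))
      ((ContinuousLinearMap.fst ℝ ℝ (Fin n → ℝ)).prod (fderiv ℝ φ (t, z))) (t, z) :=
    (hasFDerivAt_fst).prodMk (hφd (t, z)).hasFDerivAt
  have hW : HasFDerivAt (fun q : ℝ × (Fin n → ℝ) => u (q.1, φ q) i)
      ((fderiv ℝ (fun p => u p i) (t, φ (t, z))).comp
        ((ContinuousLinearMap.fst ℝ ℝ (Fin n → ℝ)).prod (fderiv ℝ φ (t, z)))) (t, z) :=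
    by have h := (hui.differentiable (by norm_num) (t, φ (t, z))).hasFDerivAt.comp (t, z) hG; exact h
  -- now compute the value of the derivative
  have hval : fderiv ℝ (fderiv ℝ g) (t, z) (0, Pi.single j 1) (1, 0) =
      (fderiv ℝ (fun p => u p i) (t, φ (t, z))).comp
        ((ContinuousLinearMap.fst ℝ ℝ (Fin n → ℝ)).prod (fderiv ℝ φ (t, z)))
        (0, Pi.single j 1) := by
    have e1 : fderiv ℝ (fun q : ℝ × (Fin n → ℝ) => fderiv ℝ g q (1, 0)) (t, z) =
        (ContinuousLinearMap.apply ℝ ℝ ((1, 0) : ℝ × (Fin n → ℝ))).comp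
          (fderiv ℝ (fderiv ℝ g) (t, z)) := hΨ.fderiv
    have e2 := hW.fderiv
    rw [hw] at e1
    rw [e2] at e1
    have := congrArg (fun (L : (ℝ × (Fin n → ℝ)) →L[ℝ] ℝ) => L (0, Pi.single j 1)) e1
    simpa using this.symm
  rw [hval] at key
  -- rewrite the RHS
  convert key using 1
  have hWcomp : ∀ k, fderiv ℝ φ (t, z) (0, Pi.single j 1) k =
      fderiv ℝ (fun y => φ (t, y) k) z (Pi.single j 1) := by
    intro k
    have hk : fderiv ℝ (fun p : ℝ × (Fin n → ℝ) => φ p k) (t, z) =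
        (ContinuousLinearMap.proj (R := ℝ) (φ := fun _ : Fin n => ℝ) k).comp
          (fderiv ℝ φ (t, z)) :=
      ((ContinuousLinearMap.proj (R := ℝ) (φ := fun _ : Fin n => ℝ) k).hasFDerivAt.comp
        (t, z) (hφd (t, z)).hasFDerivAt).fderiv
    rw [pderiv_right (f := fun p => φ p k) (p := (t, z))
      (((ContinuousLinearMap.proj (R := ℝ) (φ := fun _ : Fin n => ℝ) k).contDiff.comp
        hφ).differentiable (by norm_num) (t, z)) (Pi.single j 1), hk]
    simp
  set W : Fin n → ℝ := fderiv ℝ φ (t, z) (0, Pi.single j 1) with hWdef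
  have hdec : ((0 : ℝ), W) = ∑ k, W k • (((0 : ℝ), Pi.single k 1) : ℝ × (Fin n → ℝ)) := by
    rw [Prod.ext_iff]
    constructor
    · simp [Prod.fst_sum]
    · simp only [Prod.snd_sum, Prod.smul_snd]
      funext l
      simp [Finset.sum_apply, Pi.single_apply]
  calc ∑ k, fderiv ℝ (fun y => u (t, y) i) (φ (t, z)) (Pi.single k 1) *
        fderiv ℝ (fun y => φ (t, y) k) z (Pi.single j 1)
      = ∑ k, W k * fderiv ℝ (fun p => u p i) (t, φ (t, z)) (0, Pi.single k 1) := by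
        apply Finset.sum_congr rfl
        intro k _
        rw [← hWcomp k, pderiv_right (f := fun p => u p i) (p := (t, φ (t, z)))
          (hui.differentiable (by norm_num) (t, φ (t, z))) (Pi.single k 1)]
        ring
    _ = fderiv ℝ (fun p => u p i) (t, φ (t, z)) (0, W) := by
        rw [show ((0 : ℝ), W) = ∑ k, W k • (((0 : ℝ), Pi.single k 1) : ℝ × (Fin n → ℝ))
          from hdec]
        rw [map_sum]
        apply Finset.sum_congr rfl
        intro k _
        rw [map_smul]
        simp [mul_comm]
    _ = _ := by rw [hWdef]; rfl

/-- Liouville's formula.  If `φ` is the flow of the C¹ time-dependent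
vector field `u`, then `∂ₜ det(D_zφ(t,z)) = (div u)(t, φ(t,z)) · det(D_zφ(t,z))`. -/
theorem stmt11 {n : ℕ}
    (u : ℝ × (Fin n → ℝ) → Fin n → ℝ) (hu : ContDiff ℝ 1 u)
    (φ : ℝ × (Fin n → ℝ) → Fin n → ℝ) (hφ : ContDiff ℝ 2 φ)
    (hflow : ∀ t z, deriv (fun τ => φ (τ, z)) t = u (t, φ (t, z)))
    (hinit : ∀ z, φ (0, z) = z) :
    ∀ (t : ℝ) (z : Fin n → ℝ),
      HasDerivAt
        (fun τ => (Matrix.of fun i j => fderiv ℝ (fun y => φ (τ, y) i) z (Pi.single j 1)).det)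
        ((∑ i : Fin n, fderiv ℝ (fun y => u (t, y) i) (φ (t, z)) (Pi.single i 1)) *
          (Matrix.of fun i j => fderiv ℝ (fun y => φ (t, y) i) z (Pi.single j 1)).det)
        t := by
  intro t z
  set m : ℝ → Fin n → Fin n → ℝ :=
    fun τ i j => fderiv ℝ (fun y => φ (τ, y) i) z (Pi.single j 1) with hmdef
  set A : Fin n → Fin n → ℝ :=
    fun i k => fderiv ℝ (fun y => u (t, y) i) (φ (t, z)) (Pi.single k 1) with hAdef
  have hm : ∀ i j, HasDerivAt (fun τ => m τ i j) (∑ k, A i k * m t k j) t :=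
    fun i j => entry_deriv u hu φ hφ hflow t z i j
  have h := det_curve_deriv m (fun i j => ∑ k, A i k * m t k j) t hm
  have hsum : (∑ i, detCML n (Function.update (m t) i (fun j => ∑ k, A i k * m t k j))) =
      (∑ i, A i i) * Matrix.det (Matrix.of (m t)) := by
    have hrow : ∀ i : Fin n, (fun j => ∑ k, A i k * m t k j) = ∑ k, A i k • m t k := by
      intro i
      funext j
      simp [Finset.sum_apply]
    calc (∑ i, detCML n (Function.update (m t) i (fun j => ∑ k, A i k * m t k j)))
        = ∑ i, ∑ k, A i k • detCML n (Function.update (m t) i (m t k)) := by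
          apply Finset.sum_congr rfl
          intro i _
          rw [hrow i]
          rw [show ⇑(detCML n) = ⇑((detCML n).toMultilinearMap) from rfl]
          rw [show (∑ k, A i k • m t k) = ∑ k, (fun k => A i k • m t k) k from rfl]
          rw [(detCML n).toMultilinearMap.map_update_sum Finset.univ i
            (fun k => A i k • m t k) (m t)]
          apply Finset.sum_congr rfl
          intro k _
          exact (detCML n).toMultilinearMap.map_update_smul (m t) i (A i k) (m t k)
      _ = ∑ i, A i i * Matrix.det (Matrix.of (m t)) := by
          apply Finset.sum_congr rfl
          intro i _
          rw [Finset.sum_eq_single i]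
          · rw [Function.update_eq_self i (m t)]
            simp [detCML_apply]
          · intro k _ hk
            have hzero : detCML n (Function.update (m t) i (m t k)) = 0 := by
              have := Matrix.detRowAlternating.map_eq_zero_of_eq
                (Function.update (m t) i (m t k))
                (show Function.update (m t) i (m t k) i = Function.update (m t) i (m t k) k by
                  simp [Function.update_of_ne hk])
                (Ne.symm hk)
              exact this
            rw [hzero, smul_zero]
          · intro h
            exact absurd (Finset.mem_univ i) h
      _ = (∑ i, A i i) * Matrix.det (Matrix.of (m t)) := by rw [Finset.sum_mul]
  rw [hsum] at h
  exact h
end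

section
/- Suppose additionally that for each t the map φ(t, ·) : ℝⁿ → ℝⁿ is a bijection. Then for every measurable set Ω ⊆ ℝⁿ and every integrable function f₀ : ℝⁿ → ℝ, the phase-space probability integral over the evolving region is constant in time: ∫_{φ(t,·)(Ω)} f₀(φ(t,·)⁻¹(z)) dz = ∫_Ω f₀(z) dz for all t. -/
open scoped BigOperators
open MeasureTheory

open Matrix

lemma jacobiAux {n : ℕ} {M : ℝ → Matrix (Fin n) (Fin n) ℝ}
    {M' : Matrix (Fin n) (Fin n) ℝ} {t : ℝ}
    (h : ∀ i j, HasDerivAt (fun s => M s i j) (M' i j) t) :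
    HasDerivAt (fun s => (M s).det) (∑ j, ((M t).updateRow j (M' j)).det) t := by
  have H : HasDerivAt
      (fun s => ∑ σ : Equiv.Perm (Fin n), ((Equiv.Perm.sign σ : ℤ) : ℝ) * ∏ i, M s (σ i) i)
      (∑ σ : Equiv.Perm (Fin n), ((Equiv.Perm.sign σ : ℤ) : ℝ) *
        (∑ k, (∏ i ∈ Finset.univ.erase k, M t (σ i) i) • M' (σ k) k)) t := by
    refine HasDerivAt.fun_sum fun σ _ => ?_
    exact (HasDerivAt.fun_finsetProd fun i _ => h (σ i) i).const_mul _
  have hfun : (fun s => ∑ σ : Equiv.Perm (Fin n), ((Equiv.Perm.sign σ : ℤ) : ℝ) * ∏ i, M s (σ i) i)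
      = fun s => (M s).det := by
    funext s; rw [Matrix.det_apply']
  rw [hfun] at H
  have hval : ∑ j, ((M t).updateRow j (M' j)).det
      = ∑ σ : Equiv.Perm (Fin n), ((Equiv.Perm.sign σ : ℤ) : ℝ) *
          (∑ k, (∏ i ∈ Finset.univ.erase k, M t (σ i) i) • M' (σ k) k) := by
    simp only [Matrix.det_apply', smul_eq_mul]
    rw [Finset.sum_comm]
    refine Finset.sum_congr rfl fun σ _ => ?_
    rw [Finset.mul_sum]
    rw [← Equiv.sum_comp σ (fun j => ((Equiv.Perm.sign σ : ℤ) : ℝ) *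
        ∏ i, (M t).updateRow j (M' j) (σ i) i)]
    refine Finset.sum_congr rfl fun k _ => ?_
    congr 1
    rw [← Finset.mul_prod_erase Finset.univ _ (Finset.mem_univ k), Matrix.updateRow_self,
      mul_comm]
    congr 1
    refine Finset.prod_congr rfl fun i hi => ?_
    exact congrFun (Matrix.updateRow_ne (σ.injective.ne (Finset.ne_of_mem_erase hi))) i
  rw [hval]
  exact H

lemma detOne {n : ℕ} {M A : ℝ → Matrix (Fin n) (Fin n) ℝ}
    (h : ∀ t i j, HasDerivAt (fun s => M s i j) ((A t * M t) i j) t)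
    (htr : ∀ t, Matrix.trace (A t) = 0) (h0 : M 0 = 1) (t : ℝ) : (M t).det = 1 := by
  have key : ∀ s : ℝ, HasDerivAt (fun r => (M r).det) 0 s := by
    intro s
    have H := jacobiAux (fun i j => h s i j)
    have hval : (∑ j, ((M s).updateRow j ((A s * M s) j)).det) = 0 := by
      have : ∀ j, ((M s).updateRow j ((A s * M s) j)).det = A s j j * (M s).det := by
        intro j
        have hrow : (A s * M s) j = ∑ k, A s j k • M s k := by
          funext c
          simp [Matrix.mul_apply, Finset.sum_apply]
        rw [hrow, Matrix.det_updateRow_sum, smul_eq_mul]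
      simp only [this, ← Finset.sum_mul]
      have : ∑ j, A s j j = Matrix.trace (A s) := rfl
      rw [this, htr s, zero_mul]
    rwa [hval] at H
  have hconst : (M t).det = (M 0).det :=
    is_const_of_deriv_eq_zero (fun s => (key s).differentiableAt)
      (fun s => (key s).deriv) t 0
  rw [hconst, h0, Matrix.det_one]

open MeasureTheory

section
variable {n : ℕ}
local notation "E" => Fin n → ℝ

-- the space derivative of φ(t,·) as a CLM
noncomputable def Fder (φ : ℝ × (Fin n → ℝ) → Fin n → ℝ) (s : ℝ) (z : Fin n → ℝ) :
    (Fin n → ℝ) →L[ℝ] (Fin n → ℝ) :=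
  (fderiv ℝ φ (s, z)).comp ((0 : (Fin n → ℝ) →L[ℝ] ℝ).prod (ContinuousLinearMap.id ℝ _))

theorem detFder_eq_one
    (u : ℝ × (Fin n → ℝ) → Fin n → ℝ) (hu : ContDiff ℝ 1 u)
    (hdiv : ∀ (t : ℝ) (y : Fin n → ℝ),
      ∑ i : Fin n, fderiv ℝ (fun y' => u (t, y') i) y (Pi.single i 1) = 0)
    (φ : ℝ × (Fin n → ℝ) → Fin n → ℝ) (hφ : ContDiff ℝ 2 φ)
    (hflow : ∀ t z, deriv (fun τ => φ (τ, z)) t = u (t, φ (t, z)))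
    (hinit : ∀ z, φ (0, z) = z) (t : ℝ) (z : Fin n → ℝ) :
    (Fder φ t z).det = 1 := by
  have hφd : Differentiable ℝ φ := hφ.differentiable (by norm_num)
  have hΦ : ContDiff ℝ 1 (fderiv ℝ φ) := hφ.fderiv_right (by norm_num)
  have hΦd : Differentiable ℝ (fderiv ℝ φ) := hΦ.differentiable (by norm_num)
  have hud : Differentiable ℝ u := hu.differentiable (by norm_num)
  set inr' : (Fin n → ℝ) →L[ℝ] ℝ × (Fin n → ℝ) :=
    (0 : (Fin n → ℝ) →L[ℝ] ℝ).prod (ContinuousLinearMap.id ℝ _) with hinr'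
  -- space derivative
  have hFspec : ∀ (s : ℝ) (w : Fin n → ℝ), HasFDerivAt (fun w' => φ (s, w')) (Fder φ s w) w := by
    intro s w
    exact (hφd (s, w)).hasFDerivAt.comp w (HasFDerivAt.prodMk (hasFDerivAt_const s w) (hasFDerivAt_id w))
  -- time derivative of φ
  have hTspec : ∀ (s : ℝ) (w : Fin n → ℝ),
      HasDerivAt (fun τ => φ (τ, w)) (fderiv ℝ φ (s, w) (1, 0)) s := by
    intro s w
    exact (hφd (s, w)).hasFDerivAt.comp_hasDerivAt s (HasDerivAt.prodMk (hasDerivAt_id s) (hasDerivAt_const s w))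
  have hstar : ∀ (s : ℝ) (w : Fin n → ℝ), fderiv ℝ φ (s, w) (1, 0) = u (s, φ (s, w)) := by
    intro s w
    rw [← hflow s w, (hTspec s w).deriv]
  -- time derivative of Fder
  have hFt : ∀ s : ℝ, HasDerivAt (fun τ => Fder φ τ z)
      (((fderiv ℝ (fderiv ℝ φ) (s, z)) (1, 0)).comp inr') s := by
    intro s
    have h1 : HasDerivAt (fun τ => fderiv ℝ φ (τ, z)) ((fderiv ℝ (fderiv ℝ φ) (s, z)) (1, 0)) s :=
      (hΦd (s, z)).hasFDerivAt.comp_hasDerivAt s (HasDerivAt.prodMk (hasDerivAt_id s) (hasDerivAt_const s z))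
    exact (((ContinuousLinearMap.compL ℝ (Fin n → ℝ) (ℝ × (Fin n → ℝ))
      (Fin n → ℝ)).flip inr').hasFDerivAt.comp_hasDerivAt s h1 : _)
  -- identify the time derivative via symmetry of 2nd derivative and the flow eq
  have hFt' : ∀ s : ℝ, HasDerivAt (fun τ => Fder φ τ z)
      ((fderiv ℝ u (s, φ (s, z))).comp
        ((0 : (Fin n → ℝ) →L[ℝ] ℝ).prod (Fder φ s z))) s := by
    intro s
    have hsym := second_derivative_symmetric (f := φ) (f' := fderiv ℝ φ)
      (f'' := fderiv ℝ (fderiv ℝ φ) (s, z)) (fun y => (hφd y).hasFDerivAt)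
      ((hΦd (s, z)).hasFDerivAt)
    -- g w := fderiv φ (s,w) (1,0)
    have hg1 : HasFDerivAt (fun w => fderiv ℝ φ (s, w) (1, 0))
        ((ContinuousLinearMap.apply ℝ (Fin n → ℝ) ((1 : ℝ), (0 : Fin n → ℝ))).comp
          ((fderiv ℝ (fderiv ℝ φ) (s, z)).comp inr')) z := by
      have hin : HasFDerivAt (fun w => fderiv ℝ φ (s, w))
          ((fderiv ℝ (fderiv ℝ φ) (s, z)).comp inr') z :=
        (hΦd (s, z)).hasFDerivAt.comp z (HasFDerivAt.prodMk (hasFDerivAt_const s z) (hasFDerivAt_id z))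
      exact (ContinuousLinearMap.apply ℝ (Fin n → ℝ)
        ((1 : ℝ), (0 : Fin n → ℝ))).hasFDerivAt.comp z hin
    have hg2 : HasFDerivAt (fun w => fderiv ℝ φ (s, w) (1, 0))
        ((fderiv ℝ u (s, φ (s, z))).comp
          ((0 : (Fin n → ℝ) →L[ℝ] ℝ).prod (Fder φ s z))) z := by
      have : (fun w => fderiv ℝ φ (s, w) (1, 0)) = fun w => u (s, φ (s, w)) := by
        funext w; exact hstar s w
      rw [this]
      exact (hud (s, φ (s, z))).hasFDerivAt.comp z
        (HasFDerivAt.prodMk (hasFDerivAt_const s z) (hFspec s z))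
    have huniq := hg1.unique hg2
    have := hFt s
    convert this using 1
    ext v x
    have h2 := congrFun (congrArg DFunLike.coe huniq) v
    simp only [ContinuousLinearMap.comp_apply, ContinuousLinearMap.apply_apply] at h2
    calc (fderiv ℝ u (s, φ (s, z))) ((ContinuousLinearMap.prod 0 (Fder φ s z)) v) x
        = (fderiv ℝ (fderiv ℝ φ) (s, z)) (inr' v) (1, 0) x := by rw [h2]
      _ = (fderiv ℝ (fderiv ℝ φ) (s, z)) (1, 0) (inr' v) x := by rw [hsym]
  -- matrix picture
  set M : ℝ → Matrix (Fin n) (Fin n) ℝ :=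
    fun s => Matrix.of fun i j => Fder φ s z (Pi.single j 1) i with hM
  set A : ℝ → Matrix (Fin n) (Fin n) ℝ :=
    fun s => Matrix.of fun i k => fderiv ℝ u (s, φ (s, z)) ((0 : ℝ), Pi.single k 1) i with hA
  have hlin : ∀ (B : (ℝ × (Fin n → ℝ)) →L[ℝ] (Fin n → ℝ)) (w : Fin n → ℝ) (i : Fin n),
      B ((0 : ℝ), w) i = ∑ k, w k * B ((0 : ℝ), Pi.single k 1) i := by
    intro B w i
    have hw : (((0 : ℝ), w) : ℝ × (Fin n → ℝ))
        = ∑ k, w k • (((0 : ℝ), Pi.single k (1 : ℝ)) : ℝ × (Fin n → ℝ)) := by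
      rw [Prod.ext_iff]
      constructor
      · rw [Prod.fst_sum]; simp
      · rw [Prod.snd_sum]
        funext l
        rw [Finset.sum_apply]
        simp [Pi.single_apply]
    rw [hw, map_sum, Finset.sum_apply]
    refine Finset.sum_congr rfl fun k _ => ?_
    rw [B.map_smul]
    simp [smul_eq_mul]
  have hMd : ∀ (s : ℝ) (i j : Fin n), HasDerivAt (fun r => M r i j) ((A s * M s) i j) s := by
    intro s i j
    have heval : HasDerivAt (fun τ => Fder φ τ z (Pi.single j 1) i)
        (((fderiv ℝ u (s, φ (s, z))).comp
          ((0 : (Fin n → ℝ) →L[ℝ] ℝ).prod (Fder φ s z))) (Pi.single j 1) i) s := by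
      exact ((ContinuousLinearMap.proj i).comp
        ((ContinuousLinearMap.apply ℝ (Fin n → ℝ)) (Pi.single j 1))).hasFDerivAt.comp_hasDerivAt
        s (hFt' s)
    have hval : (((fderiv ℝ u (s, φ (s, z))).comp
          ((0 : (Fin n → ℝ) →L[ℝ] ℝ).prod (Fder φ s z))) (Pi.single j 1) i)
        = (A s * M s) i j := by
      have h1 : ((0 : (Fin n → ℝ) →L[ℝ] ℝ).prod (Fder φ s z)) (Pi.single j 1)
          = (((0 : ℝ), Fder φ s z (Pi.single j 1)) : ℝ × (Fin n → ℝ)) := rfl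
      rw [ContinuousLinearMap.comp_apply, h1, hlin, Matrix.mul_apply]
      refine Finset.sum_congr rfl fun k _ => ?_
      rw [mul_comm]
      rfl
    rw [← hval]
    exact heval
  have htr : ∀ s : ℝ, Matrix.trace (A s) = 0 := by
    intro s
    have hcoord : ∀ i : Fin n, fderiv ℝ u (s, φ (s, z)) ((0 : ℝ), Pi.single i 1) i
        = fderiv ℝ (fun y' => u (s, y') i) (φ (s, z)) (Pi.single i 1) := by
      intro i
      have hF : HasFDerivAt (fun y' => u (s, y') i)
          ((ContinuousLinearMap.proj i).comp ((fderiv ℝ u (s, φ (s, z))).comp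
            ((0 : (Fin n → ℝ) →L[ℝ] ℝ).prod (ContinuousLinearMap.id ℝ _)))) (φ (s, z)) := by
        exact (ContinuousLinearMap.proj i).hasFDerivAt.comp _
          ((hud (s, φ (s, z))).hasFDerivAt.comp _
            (HasFDerivAt.prodMk (hasFDerivAt_const s _) (hasFDerivAt_id _)))
      rw [hF.fderiv]
      rfl
    have : Matrix.trace (A s)
        = ∑ i : Fin n, fderiv ℝ (fun y' => u (s, y') i) (φ (s, z)) (Pi.single i 1) := by
      unfold Matrix.trace Matrix.diag
      exact Finset.sum_congr rfl fun i _ => hcoord i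
    rw [this]
    exact hdiv s (φ (s, z))
  have hM0 : M 0 = 1 := by
    have hid : (fun w => φ ((0 : ℝ), w)) = id := funext hinit
    have h1 : HasFDerivAt (fun w => φ ((0 : ℝ), w)) (Fder φ 0 z) z := hFspec 0 z
    rw [hid] at h1
    have h2 : Fder φ 0 z = ContinuousLinearMap.id ℝ (Fin n → ℝ) :=
      h1.unique (hasFDerivAt_id z)
    funext i j
    rw [hM]
    simp only [Matrix.of_apply, h2, ContinuousLinearMap.coe_id', id_eq]
    rw [Matrix.one_apply, Pi.single_apply]
  have hdetM : (M t).det = 1 := detOne hMd htr hM0 t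
  have hmat : LinearMap.toMatrix (Pi.basisFun ℝ (Fin n)) (Pi.basisFun ℝ (Fin n))
      ((Fder φ t z) : (Fin n → ℝ) →ₗ[ℝ] (Fin n → ℝ)) = M t := by
    funext i j
    rw [LinearMap.toMatrix_apply, Pi.basisFun_apply, Pi.basisFun_repr]
    rfl
  have hdetF : (Fder φ t z).det = (M t).det := by
    rw [← hmat, LinearMap.det_toMatrix]
  rw [hdetF, hdetM]

end

/-- the flow of a divergence-free C¹ vector field preserves the
phase-space probability integral: for any measurable region `Ω`, integrable `f₀`
and time `t`, `∫_{φ(t,·)(Ω)} f₀(φ(t,·)⁻¹(z)) dz = ∫_Ω f₀(z) dz`. -/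
theorem stmt13 {n : ℕ}
    (u : ℝ × (Fin n → ℝ) → Fin n → ℝ) (hu : ContDiff ℝ 1 u)
    (hdiv : ∀ (t : ℝ) (y : Fin n → ℝ),
      ∑ i : Fin n, fderiv ℝ (fun y' => u (t, y') i) y (Pi.single i 1) = 0)
    (φ : ℝ × (Fin n → ℝ) → Fin n → ℝ) (hφ : ContDiff ℝ 2 φ)
    (hflow : ∀ t z, deriv (fun τ => φ (τ, z)) t = u (t, φ (t, z)))
    (hinit : ∀ z, φ (0, z) = z)
    (hbij : ∀ t : ℝ, Function.Bijective fun z => φ (t, z)) :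
    ∀ Ω : Set (Fin n → ℝ), MeasurableSet Ω →
      ∀ f₀ : (Fin n → ℝ) → ℝ, Integrable f₀ →
        ∀ t : ℝ,
          (∫ z in (fun z => φ (t, z)) '' Ω, f₀ (Function.invFun (fun z => φ (t, z)) z))
            = ∫ z in Ω, f₀ z := by
  intro Ω hΩ f₀ hf₀ t
  have hφd : Differentiable ℝ φ := hφ.differentiable (by norm_num)
  have hFspec : ∀ x : Fin n → ℝ, HasFDerivAt (fun w => φ (t, w)) (Fder φ t x) x := fun x =>
    (hφd (t, x)).hasFDerivAt.comp x (HasFDerivAt.prodMk (hasFDerivAt_const t x) (hasFDerivAt_id x))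
  have hdet : ∀ x, (Fder φ t x).det = 1 := fun x => detFder_eq_one u hu hdiv φ hφ hflow hinit t x
  rw [integral_image_eq_integral_abs_det_fderiv_smul volume hΩ
    (fun x _ => (hFspec x).hasFDerivWithinAt) ((hbij t).injective.injOn) _]
  have hli : ∀ x : Fin n → ℝ, Function.invFun (fun z => φ (t, z)) (φ (t, x)) = x := fun x =>
    Function.leftInverse_invFun (hbij t).injective x
  simp only [hdet, abs_one, one_smul]
  exact setIntegral_congr_fun hΩ fun x _ => by rw [hli x]
end

section
/- Assume the continuity equation ∂_t F + Σ_{j=1}^{6} ∂_{z_j}(F U_j) = 0 and, for each spatial index i = 1, 2, 3, the Lie–Poisson momentum equation ∂_t p_i = −Σ_{j=1}^{6} ∂_{z_j}(p_i U_j) − Σ_{j=1}^{3} p_j ∂_{x_i} U_j + F ∂_{x_i}(½ m|v|² + q v·A(t,x) − q Φ(t,x)). Then at every point (t, x, v) with F(t, x, v) ≠ 0 the Lorentz force law holds: m a(t, x, v) = q (E(t, x) + v × B(t, x)), where E = −∇_x Φ − ∂_t A and B = ∇_x × A. -/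
open scoped BigOperators

/-- partial derivative of a scalar field on `ℝ³` in the `i`-th coordinate direction -/
noncomputable def pd3 (f : (Fin 3 → ℝ) → ℝ) (x : Fin 3 → ℝ) (i : Fin 3) : ℝ :=
  fderiv ℝ f x (Pi.single i 1)

/-- curl of a vector field on `ℝ³` -/
noncomputable def curl3 (f : (Fin 3 → ℝ) → Fin 3 → ℝ) (x : Fin 3 → ℝ) : Fin 3 → ℝ :=
  ![pd3 (fun y => f y 2) x 1 - pd3 (fun y => f y 1) x 2,
    pd3 (fun y => f y 0) x 2 - pd3 (fun y => f y 2) x 0,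
    pd3 (fun y => f y 1) x 0 - pd3 (fun y => f y 0) x 1]

private lemma fderiv_mul_apply' {E : Type*} [NormedAddCommGroup E] [NormedSpace ℝ E]
    {f g : E → ℝ} {x : E} (hf : DifferentiableAt ℝ f x) (hg : DifferentiableAt ℝ g x) (w : E) :
    fderiv ℝ (fun y => f y * g y) x w = fderiv ℝ f x w * g x + f x * fderiv ℝ g x w := by
  rw [fderiv_fun_mul hf hg]
  simp only [ContinuousLinearMap.add_apply, ContinuousLinearMap.smul_apply, smul_eq_mul]
  ring

private lemma fderiv_lin3 (c m' : ℝ) (i : Fin 3) (v u : Fin 3 → ℝ) :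
    fderiv ℝ (fun w : Fin 3 → ℝ => m' * w i + c) v u = m' * u i := by
  have h : HasFDerivAt (fun w : Fin 3 → ℝ => m' * w i + c)
      (m' • (ContinuousLinearMap.proj i : (Fin 3 → ℝ) →L[ℝ] ℝ)) v := by
    simpa using (((ContinuousLinearMap.proj (R := ℝ) (φ := fun _ : Fin 3 => ℝ)
      i).hasFDerivAt.const_mul m').add_const c)
  rw [h.fderiv]
  simp

/-- from the phase-space continuity equation and the Lie–Poisson
momentum equation for the spatial momentum density `p = F(mv + qA)`, the Lorentz
force law `m a = q(E + v × B)` holds wherever `F ≠ 0`, with `E = −∇ₓΦ − ∂ₜA` and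
`B = ∇ₓ × A`. -/
theorem stmt18 (m q : ℝ) (hm : m ≠ 0)
    (F : ℝ × (Fin 3 → ℝ) × (Fin 3 → ℝ) → ℝ)
    (a : ℝ × (Fin 3 → ℝ) × (Fin 3 → ℝ) → Fin 3 → ℝ)
    (Φ : ℝ × (Fin 3 → ℝ) → ℝ) (A : ℝ × (Fin 3 → ℝ) → Fin 3 → ℝ)
    (hF : ContDiff ℝ 1 F) (ha : ContDiff ℝ 1 a)
    (hΦ : ContDiff ℝ 1 Φ) (hA : ContDiff ℝ 1 A)
    (U : ℝ × (Fin 3 → ℝ) × (Fin 3 → ℝ) → (Fin 3 → ℝ) × (Fin 3 → ℝ))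
    (hU : ∀ (t : ℝ) (x v : Fin 3 → ℝ), U (t, x, v) = (v, a (t, x, v)))
    (p : ℝ × (Fin 3 → ℝ) × (Fin 3 → ℝ) → Fin 3 → ℝ)
    (hp : ∀ (t : ℝ) (x v : Fin 3 → ℝ),
      p (t, x, v) = F (t, x, v) • (m • v + q • A (t, x)))
    -- continuity equation  ∂ₜF + Σⱼ ∂_{zⱼ}(F Uⱼ) = 0
    (hcont : ∀ (t : ℝ) (x v : Fin 3 → ℝ),
      deriv (fun τ => F (τ, x, v)) t
        + (∑ j : Fin 3,
            fderiv ℝ (fun y => F (t, y, v) * (U (t, y, v)).1 j) x (Pi.single j 1))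
        + (∑ j : Fin 3,
            fderiv ℝ (fun w => F (t, x, w) * (U (t, x, w)).2 j) v (Pi.single j 1))
        = 0)
    -- Lie–Poisson momentum equation for the spatial momentum components
    (hmom : ∀ (t : ℝ) (x v : Fin 3 → ℝ) (i : Fin 3),
      deriv (fun τ => p (τ, x, v) i) t
        = -((∑ j : Fin 3,
              fderiv ℝ (fun y => p (t, y, v) i * (U (t, y, v)).1 j) x (Pi.single j 1))
            + ∑ j : Fin 3,
              fderiv ℝ (fun w => p (t, x, w) i * (U (t, x, w)).2 j) v (Pi.single j 1))
          - (∑ j : Fin 3,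
              p (t, x, v) j * fderiv ℝ (fun y => (U (t, y, v)).1 j) x (Pi.single i 1))
          + F (t, x, v) *
              fderiv ℝ
                (fun y => (1/2) * m * (∑ k : Fin 3, v k ^ 2)
                  + q * (∑ k : Fin 3, v k * A (t, y) k) - q * Φ (t, y))
                x (Pi.single i 1)) :
    ∀ (t : ℝ) (x v : Fin 3 → ℝ), F (t, x, v) ≠ 0 →
      m • a (t, x, v)
        = q • ((fun i => -pd3 (fun y => Φ (t, y)) x i - deriv (fun τ => A (τ, x) i) t)
            + crossProduct v (curl3 (fun y => A (t, y)) x)) := by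
  intro t x v hF0
  have hFd := hF.differentiable one_ne_zero
  have had := ha.differentiable one_ne_zero
  have hAd := hA.differentiable one_ne_zero
  have hΦd := hΦ.differentiable one_ne_zero
  have hFx : Differentiable ℝ (fun y : Fin 3 → ℝ => F (t, y, v)) := by fun_prop
  have hFw : Differentiable ℝ (fun w : Fin 3 → ℝ => F (t, x, w)) := by fun_prop
  have hFt : Differentiable ℝ (fun τ : ℝ => F (τ, x, v)) := by fun_prop
  have hAx : ∀ k : Fin 3, Differentiable ℝ (fun y : Fin 3 → ℝ => A (t, y) k) := by
    intro k; fun_prop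
  have hAt : ∀ k : Fin 3, Differentiable ℝ (fun τ : ℝ => A (τ, x) k) := by
    intro k; fun_prop
  have hΦx : Differentiable ℝ (fun y : Fin 3 → ℝ => Φ (t, y)) := by fun_prop
  have haw : ∀ j : Fin 3, Differentiable ℝ (fun w : Fin 3 → ℝ => a (t, x, w) j) := by
    intro j; fun_prop
  -- time derivative of p_i
  have hT1 : ∀ i : Fin 3, deriv (fun τ => F (τ, x, v) * (m * v i + q * A (τ, x) i)) t
      = deriv (fun τ => F (τ, x, v)) t * (m * v i + q * A (t, x) i)
        + F (t, x, v) * (q * deriv (fun τ => A (τ, x) i) t) := by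
    intro i
    rw [deriv_fun_mul (hFt t) (by fun_prop)]
    congr 1
    rw [deriv_const_add, deriv_const_mul _ ((hAt i) t)]
  -- x-divergence terms of momentum eq
  have hT2 : ∀ (i j : Fin 3),
      fderiv ℝ (fun y => F (t, y, v) * (m * v i + q * A (t, y) i) * v j) x (Pi.single j 1)
      = (fderiv ℝ (fun y => F (t, y, v)) x (Pi.single j 1) * (m * v i + q * A (t, x) i)
          + F (t, x, v) * (q * fderiv ℝ (fun y => A (t, y) i) x (Pi.single j 1))) * v j := by
    intro i j
    rw [fderiv_mul_apply' (x := x) (f := fun y => F (t, y, v) * (m * v i + q * A (t, y) i))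
        (g := fun _ => v j) (by fun_prop) (by fun_prop)]
    rw [fderiv_mul_apply' (hFx x) (by fun_prop)]
    rw [fderiv_const_add, fderiv_const_mul ((hAx i) x)]
    simp only [fderiv_fun_const, Pi.zero_apply, ContinuousLinearMap.zero_apply,
      ContinuousLinearMap.smul_apply, smul_eq_mul, mul_zero, add_zero]
  -- v-divergence terms of momentum eq
  have hT3 : ∀ (i j : Fin 3),
      fderiv ℝ (fun w => F (t, x, w) * (m * w i + q * A (t, x) i) * a (t, x, w) j) v
        (Pi.single j 1)
      = fderiv ℝ (fun w => F (t, x, w) * a (t, x, w) j) v (Pi.single j 1)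
          * (m * v i + q * A (t, x) i)
        + (F (t, x, v) * a (t, x, v) j) * (m * (Pi.single j 1 : Fin 3 → ℝ) i) := by
    intro i j
    have hre : (fun w => F (t, x, w) * (m * w i + q * A (t, x) i) * a (t, x, w) j)
        = fun w => (F (t, x, w) * a (t, x, w) j) * (m * w i + q * A (t, x) i) := by
      funext w; ring
    rw [hre, fderiv_mul_apply' (by fun_prop) (by fun_prop), fderiv_lin3]
  -- Hamiltonian gradient terms
  have hT5 : ∀ i : Fin 3,
      fderiv ℝ (fun y => (1/2) * m * (∑ k : Fin 3, v k ^ 2)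
          + q * (∑ k : Fin 3, v k * A (t, y) k) - q * Φ (t, y)) x (Pi.single i 1)
      = q * (∑ k : Fin 3, v k * fderiv ℝ (fun y => A (t, y) k) x (Pi.single i 1))
        - q * fderiv ℝ (fun y => Φ (t, y)) x (Pi.single i 1) := by
    intro i
    rw [fderiv_fun_sub (by fun_prop) (by fun_prop)]
    simp only [ContinuousLinearMap.coe_sub', Pi.sub_apply]
    congr 1
    · rw [fderiv_const_add, fderiv_const_mul (by fun_prop)]
      rw [fderiv_fun_sum (fun k _ => by fun_prop)]
      simp only [ContinuousLinearMap.smul_apply, smul_eq_mul, ContinuousLinearMap.sum_apply]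
      congr 1
      refine Finset.sum_congr rfl fun k _ => ?_
      rw [fderiv_const_mul ((hAx k) x)]
      simp
    · rw [fderiv_const_mul (hΦx x)]
      simp
  -- continuity: x-part simplification
  have DFsum : ∀ j : Fin 3, fderiv ℝ (fun y => F (t, y, v) * v j) x (Pi.single j 1)
      = fderiv ℝ (fun y => F (t, y, v)) x (Pi.single j 1) * v j := by
    intro j
    rw [fderiv_mul_apply' (hFx x) (differentiableAt_const _)]
    simp
  have h2 := hcont t x v
  simp only [hU] at h2
  simp only [DFsum] at h2
  have hT3sum : ∀ i : Fin 3,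
      (∑ j : Fin 3, fderiv ℝ (fun w => F (t, x, w) * (m * w i + q * A (t, x) i) * a (t, x, w) j) v
        (Pi.single j 1))
      = (∑ j : Fin 3, fderiv ℝ (fun w => F (t, x, w) * a (t, x, w) j) v (Pi.single j 1))
          * (m * v i + q * A (t, x) i)
        + F (t, x, v) * (m * a (t, x, v) i) := by
    intro i
    simp only [hT3]
    rw [Finset.sum_add_distrib, ← Finset.sum_mul]
    congr 1
    have hδ : ∀ j : Fin 3, F (t, x, v) * a (t, x, v) j * (m * (Pi.single j 1 : Fin 3 → ℝ) i)
        = if i = j then F (t, x, v) * (m * a (t, x, v) j) else 0 := by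
      intro j
      rw [Pi.single_apply]
      split <;> ring
    simp only [hδ, Finset.sum_ite_eq, Finset.mem_univ, if_true]
  have h1 := hmom t x v
  simp only [hU, hp, Pi.smul_apply, Pi.add_apply, smul_eq_mul] at h1
  simp only [hT1, hT2, hT3sum, hT5, fderiv_fun_const, Pi.zero_apply,
    ContinuousLinearMap.zero_apply, mul_zero] at h1
  have key : ∀ i : Fin 3,
      F (t, x, v) * (m * a (t, x, v) i)
      = F (t, x, v) * (q * (-(fderiv ℝ (fun y => Φ (t, y)) x (Pi.single i 1))
            - deriv (fun τ => A (τ, x) i) t)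
          + q * ∑ k : Fin 3, v k * (fderiv ℝ (fun y => A (t, y) k) x (Pi.single i 1)
              - fderiv ℝ (fun y => A (t, y) i) x (Pi.single k 1))) := by
    intro i
    have h1i := h1 i
    simp only [Fin.sum_univ_three] at h1i h2 ⊢
    linear_combination h1i - (m * v i + q * A (t, x) i) * h2
  funext i
  rcases (by decide : ∀ i : Fin 3, i = 0 ∨ i = 1 ∨ i = 2) i with rfl | rfl | rfl
  · simp only [Pi.smul_apply, smul_eq_mul, Pi.add_apply, cross_apply, curl3, pd3,
      Matrix.cons_val_zero, Matrix.cons_val_one, Matrix.head_cons, Matrix.cons_val_two,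
      Matrix.tail_cons]
    refine mul_left_cancel₀ hF0 ?_
    have k := key 0
    rw [Fin.sum_univ_three] at k
    linear_combination k
  · simp only [Pi.smul_apply, smul_eq_mul, Pi.add_apply, cross_apply, curl3, pd3,
      Matrix.cons_val_zero, Matrix.cons_val_one, Matrix.head_cons, Matrix.cons_val_two,
      Matrix.tail_cons]
    refine mul_left_cancel₀ hF0 ?_
    have k := key 1
    rw [Fin.sum_univ_three] at k
    linear_combination k
  · simp only [Pi.smul_apply, smul_eq_mul, Pi.add_apply, cross_apply, curl3, pd3,
      Matrix.cons_val_zero, Matrix.cons_val_one, Matrix.head_cons, Matrix.cons_val_two,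
      Matrix.tail_cons]
    refine mul_left_cancel₀ hF0 ?_
    have k := key 2
    rw [Fin.sum_univ_three] at k
    linear_combination k
end
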